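/- Let P and Q be probability measures on a measurable space 𝒟 with KL(P‖Q) ≤ τ for some τ ≥ 0. Let ℛ be a measurable space, ε > 0, δ ∈ [0,1], γ ∈ (0,1), and let M assign to each database D ∈ 𝒟^n a probability measure M(D) on ℛ. Let A ⊆ 𝒟^{n+1} be the set of all w such that the induced neighbouring pair D(w), D'(w) satisfies: for every measurable R ⊆ ℛ, M(D(w))(R) ≤ e^ε · M(D'(w))(R) + δ; assume A is measurable. If P^{⊗(n+1)}(A) ≥ 1 − γ, then Q^{⊗(n+1)}(A) ≥ 1 − γ − √((n+1)·τ/2). -/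

import Mathlib

open MeasureTheory Real
open scoped ENNReal

lemma my_log_ge {y : ℝ} (hy : 0 < y) : 1 - y⁻¹ ≤ Real.log y := by
  have h := Real.log_le_sub_one_of_pos (inv_pos.mpr hy)
  rw [Real.log_inv] at h
  linarith

lemma my_xlogx_nonneg {x : ℝ} (hx : 0 ≤ x) : 0 ≤ x * Real.log x - x + 1 := by
  rcases eq_or_lt_of_le hx with h | h
  · simp [← h]
  · have h1 := my_log_ge h
    have h2 : x * (1 - x⁻¹) ≤ x * Real.log x := by
      exact mul_le_mul_of_nonneg_left h1 hx
    have h3 : x * (1 - x⁻¹) = x - 1 := by field_simp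
    linarith

lemma my_key_ineq {x : ℝ} (hx : 0 ≤ x) :
    3 * (x - 1) ^ 2 ≤ (2 * x + 4) * (x * Real.log x - x + 1) := by
  set φ : ℝ → ℝ := fun y => (y + 1) * Real.log y - 2 * (y - 1) with hφ
  have hφd : ∀ y : ℝ, 0 < y →
      HasDerivAt φ (Real.log y + (y + 1) * y⁻¹ - 2) y := by
    intro y hy
    have h1 : HasDerivAt (fun y : ℝ => (y + 1) * Real.log y)
        (1 * Real.log y + (y + 1) * y⁻¹) y :=
      ((hasDerivAt_id y).add_const 1).mul (Real.hasDerivAt_log hy.ne')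
    have h2 : HasDerivAt (fun y : ℝ => 2 * (y - 1)) 2 y := by
      simpa using ((hasDerivAt_id y).sub_const 1).const_mul 2
    have h3 := h1.sub h2
    rw [one_mul] at h3
    exact h3
  have hφd_nonneg : ∀ y : ℝ, 0 < y → 0 ≤ Real.log y + (y + 1) * y⁻¹ - 2 := by
    intro y hy
    have h1 := my_log_ge hy
    have h2 : (y + 1) * y⁻¹ = 1 + y⁻¹ := by field_simp
    linarith
  have hφmono : MonotoneOn φ (Set.Ioi (0:ℝ)) := by
    apply monotoneOn_of_deriv_nonneg (convex_Ioi 0)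
    · exact fun y hy => ((hφd y hy).differentiableAt.continuousAt).continuousWithinAt
    · intro y hy
      rw [interior_Ioi] at hy
      exact (hφd y hy).differentiableAt.differentiableWithinAt
    · intro y hy
      rw [interior_Ioi] at hy
      rw [(hφd y hy).deriv]
      exact hφd_nonneg y hy
  have hφ1 : φ 1 = 0 := by simp [hφ]
  have hφ_nonneg : ∀ y : ℝ, 1 ≤ y → 0 ≤ φ y := by
    intro y hy
    have := hφmono (Set.mem_Ioi.mpr one_pos) (Set.mem_Ioi.mpr (lt_of_lt_of_le one_pos hy)) hy
    rwa [hφ1] at this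
  have hφ_nonpos : ∀ y : ℝ, 0 < y → y ≤ 1 → φ y ≤ 0 := by
    intro y hy hy1
    have := hφmono (Set.mem_Ioi.mpr hy) (Set.mem_Ioi.mpr one_pos) hy1
    rwa [hφ1] at this
  set h : ℝ → ℝ := fun y => (2 * y + 4) * (y * Real.log y - y + 1) - 3 * (y - 1) ^ 2 with hh
  have hhd : ∀ y : ℝ, 0 < y → HasDerivAt h (4 * φ y) y := by
    intro y hy
    have hw : HasDerivAt (fun y : ℝ => y * Real.log y - y + 1) (Real.log y) y := by
      have h1 : HasDerivAt (fun y : ℝ => y * Real.log y)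
          (1 * Real.log y + y * y⁻¹) y :=
        (hasDerivAt_id y).mul (Real.hasDerivAt_log hy.ne')
      have h2 : y * y⁻¹ = 1 := mul_inv_cancel₀ hy.ne'
      have := (h1.sub (hasDerivAt_id y)).add_const 1
      simpa [h2] using this
    have h3 : HasDerivAt (fun y : ℝ => 2 * y + 4) 2 y := by
      simpa using ((hasDerivAt_id y).const_mul 2).add_const 4
    have h4 : HasDerivAt (fun y : ℝ => (2 * y + 4) * (y * Real.log y - y + 1))
        (2 * (y * Real.log y - y + 1) + (2 * y + 4) * Real.log y) y := h3.mul hw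
    have h5 : HasDerivAt (fun y : ℝ => 3 * (y - 1) ^ 2) (3 * (2 * (y - 1))) y := by
      simpa using (((hasDerivAt_id y).sub_const 1).pow 2).const_mul 3
    have h6 := h4.sub h5
    have hc : 2 * (y * Real.log y - y + 1) + (2 * y + 4) * Real.log y - 3 * (2 * (y - 1))
        = 4 * φ y := by simp only [hφ]; ring
    rw [hc] at h6
    exact h6
  have hh1 : h 1 = 0 := by simp [hh]
  rcases eq_or_lt_of_le hx with h0 | hxpos
  · have : h 0 = 1 := by simp [hh]; ring
    have : 0 ≤ h 0 := by rw [this]; norm_num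
    rw [← h0]
    simp only [hh] at this
    linarith
  rcases le_total x 1 with hx1 | hx1
  · have hanti : AntitoneOn h (Set.Icc x 1) := by
      apply antitoneOn_of_deriv_nonpos (convex_Icc x 1)
      · intro y hy
        have hy0 : 0 < y := lt_of_lt_of_le hxpos hy.1
        exact (hhd y hy0).differentiableAt.continuousAt.continuousWithinAt
      · intro y hy
        rw [interior_Icc] at hy
        have hy0 : 0 < y := lt_of_lt_of_le hxpos hy.1.le
        exact (hhd y hy0).differentiableAt.differentiableWithinAt
      · intro y hy
        rw [interior_Icc] at hy
        have hy0 : 0 < y := lt_of_lt_of_le hxpos hy.1.le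
        rw [(hhd y hy0).deriv]
        have := hφ_nonpos y hy0 hy.2.le
        linarith
    have := hanti (Set.mem_Icc.mpr ⟨le_refl x, hx1⟩) (Set.mem_Icc.mpr ⟨hx1, le_refl 1⟩) hx1
    rw [hh1] at this
    simp only [hh] at this
    linarith
  · have hmono : MonotoneOn h (Set.Icc 1 x) := by
      apply monotoneOn_of_deriv_nonneg (convex_Icc 1 x)
      · intro y hy
        have hy0 : 0 < y := lt_of_lt_of_le one_pos hy.1
        exact (hhd y hy0).differentiableAt.continuousAt.continuousWithinAt
      · intro y hy
        rw [interior_Icc] at hy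
        have hy0 : 0 < y := lt_of_lt_of_le one_pos hy.1.le
        exact (hhd y hy0).differentiableAt.differentiableWithinAt
      · intro y hy
        rw [interior_Icc] at hy
        have hy0 : 0 < y := lt_of_lt_of_le one_pos hy.1.le
        rw [(hhd y hy0).deriv]
        have := hφ_nonneg y hy.1.le
        linarith
    have := hmono (Set.mem_Icc.mpr ⟨le_refl 1, hx1⟩) (Set.mem_Icc.mpr ⟨hx1, le_refl x⟩) hx1
    rw [hh1] at this
    simp only [hh] at this
    linarith

open scoped ENNReal

lemma my_pinsker {α : Type*} [MeasurableSpace α] (μ ν : Measure α)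
    [IsProbabilityMeasure μ] [IsProbabilityMeasure ν]
    (hac : μ ≪ ν) (hint : Integrable (llr μ ν) μ)
    (A : Set α) (hA : MeasurableSet A) :
    (μ A).toReal - (ν A).toReal ≤ Real.sqrt ((∫ x, llr μ ν x ∂μ) / 2) := by
  set g : α → ℝ := fun x => (μ.rnDeriv ν x).toReal with hg
  have hg_meas : Measurable g := (Measure.measurable_rnDeriv μ ν).ennreal_toReal
  have hg_nonneg : ∀ x, 0 ≤ g x := fun _ => ENNReal.toReal_nonneg
  have hg_int : Integrable g ν := Measure.integrable_toReal_rnDeriv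
  have hg_integral : ∫ x, g x ∂ν = 1 := by
    rw [hg, Measure.integral_toReal_rnDeriv hac]; simp
  set KL : ℝ := ∫ x, llr μ ν x ∂μ with hKL
  -- g * log g is integrable w.r.t. ν with integral KL
  have hgl_int : Integrable (fun x => g x * Real.log (g x)) ν := by
    have := (integrable_rnDeriv_smul_iff hac).mpr hint
    simpa [llr_def, smul_eq_mul] using this
  have hgl_integral : ∫ x, g x * Real.log (g x) ∂ν = KL := by
    have := integral_rnDeriv_smul hac (f := llr μ ν)
    simpa [llr_def, smul_eq_mul, hKL] using this
  set k : α → ℝ := fun x => g x * Real.log (g x) - g x + 1 with hk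
  have hk_int : Integrable k ν := (hgl_int.sub hg_int).add (integrable_const 1)
  have hk_nonneg : ∀ x, 0 ≤ k x := fun x => my_xlogx_nonneg (hg_nonneg x)
  have hk_integral : ∫ x, k x ∂ν = KL := by
    calc ∫ x, k x ∂ν
        = ∫ x, (g x * Real.log (g x) - g x) ∂ν + ∫ _x, (1:ℝ) ∂ν :=
          integral_add (hgl_int.sub hg_int) (integrable_const 1)
      _ = KL := by
          rw [integral_sub hgl_int hg_int, hgl_integral, hg_integral, integral_const]
          simp
  have hKL_nonneg : 0 ≤ KL := hk_integral ▸ integral_nonneg hk_nonneg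
  set u : α → ℝ := fun x => Real.sqrt ((2 * g x + 4) / 3) with hu
  set v : α → ℝ := fun x => Real.sqrt (k x) with hv
  have hu_meas : Measurable u := (((hg_meas.const_mul 2).add_const 4).div_const 3).sqrt
  have hv_meas : Measurable v :=
    (((hg_meas.mul (hg_meas.log)).sub hg_meas).add_const 1).sqrt
  have hu_sq : ∀ x, u x ^ 2 = (2 * g x + 4) / 3 := fun x =>
    Real.sq_sqrt (by have := hg_nonneg x; linarith)
  have hv_sq : ∀ x, v x ^ 2 = k x := fun x => Real.sq_sqrt (hk_nonneg x)
  have hu_mem : MemLp u 2 ν := by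
    rw [memLp_two_iff_integrable_sq hu_meas.aestronglyMeasurable]
    have : Integrable (fun x => (2 * g x + 4) / 3) ν :=
      ((hg_int.const_mul 2).add (integrable_const 4)).div_const 3
    exact this.congr (Filter.Eventually.of_forall fun x => (hu_sq x).symm)
  have hv_mem : MemLp v 2 ν := by
    rw [memLp_two_iff_integrable_sq hv_meas.aestronglyMeasurable]
    exact hk_int.congr (Filter.Eventually.of_forall fun x => (hv_sq x).symm)
  have huv_int : Integrable (fun x => u x * v x) ν := by
    rw [← memLp_one_iff_integrable]
    have := hv_mem.smul (r := 1) hu_mem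
    exact this
  have habs : ∀ x, |g x - 1| ≤ u x * v x := by
    intro x
    have h1 : (g x - 1) ^ 2 ≤ (2 * g x + 4) / 3 * k x := by
      have := my_key_ineq (hg_nonneg x)
      nlinarith [this]
    calc |g x - 1| = Real.sqrt ((g x - 1) ^ 2) := (Real.sqrt_sq_eq_abs _).symm
      _ ≤ Real.sqrt ((2 * g x + 4) / 3 * k x) := Real.sqrt_le_sqrt h1
      _ = u x * v x := by
          rw [Real.sqrt_mul (by have := hg_nonneg x; linarith)]
  -- Hölder
  have htwo : Real.HolderConjugate 2 2 := ⟨by norm_num, by norm_num, by norm_num⟩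
  have hCS : ∫ x, u x * v x ∂ν ≤ Real.sqrt 2 * Real.sqrt KL := by
    have h := integral_mul_le_Lp_mul_Lq_of_nonneg htwo
      (Filter.Eventually.of_forall fun x => Real.sqrt_nonneg _)
      (Filter.Eventually.of_forall fun x => Real.sqrt_nonneg _)
      (by simpa using hu_mem) (by simpa using hv_mem)
    have h' : ∫ x, u x * v x ∂ν ≤
        (∫ x, u x ^ (2:ℝ) ∂ν) ^ (1/2:ℝ) * (∫ x, v x ^ (2:ℝ) ∂ν) ^ (1/2:ℝ) := h
    have hu2 : ∫ x, u x ^ (2:ℝ) ∂ν = 2 := by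
      have : ∀ x, u x ^ (2:ℝ) = (2 * g x + 4) / 3 := by
        intro x
        rw [show (2:ℝ) = ((2:ℕ):ℝ) by norm_num, Real.rpow_natCast]
        exact hu_sq x
      rw [integral_congr_ae (Filter.Eventually.of_forall this),
        integral_div, integral_add (hg_int.const_mul 2) (integrable_const 4),
        integral_const_mul, hg_integral, integral_const]
      simp
      norm_num
    have hv2 : ∫ x, v x ^ (2:ℝ) ∂ν = KL := by
      have : ∀ x, v x ^ (2:ℝ) = k x := by
        intro x
        rw [show (2:ℝ) = ((2:ℕ):ℝ) by norm_num, Real.rpow_natCast]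
        exact hv_sq x
      rw [integral_congr_ae (Filter.Eventually.of_forall this), hk_integral]
    rw [hu2, hv2] at h'
    calc ∫ x, u x * v x ∂ν ≤ (2:ℝ) ^ (1/2:ℝ) * KL ^ (1/2:ℝ) := h'
      _ = Real.sqrt 2 * Real.sqrt KL := by
          rw [← Real.sqrt_eq_rpow, ← Real.sqrt_eq_rpow]
  -- |g - 1| integral bound
  have habs_int : Integrable (fun x => |g x - 1|) ν := (hg_int.sub (integrable_const 1)).abs
  have habs_le : ∫ x, |g x - 1| ∂ν ≤ Real.sqrt 2 * Real.sqrt KL :=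
    le_trans (integral_mono habs_int huv_int habs) hCS
  -- positive part
  set p : α → ℝ := fun x => max (g x - 1) 0 with hp
  have hp_int : Integrable p ν := (hg_int.sub (integrable_const 1)).pos_part
  have hp_nonneg : ∀ x, 0 ≤ p x := fun x => le_max_right _ _
  have hgm1_integral : ∫ x, (g x - 1) ∂ν = 0 := by
    rw [integral_sub hg_int (integrable_const 1), hg_integral, integral_const]
    simp
  have habs_eq : ∀ x, |g x - 1| = 2 * p x - (g x - 1) := by
    intro x
    rcases le_total (g x - 1) 0 with h | h
    · rw [abs_of_nonpos h, hp]; simp only [max_eq_right h]; ring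
    · rw [abs_of_nonneg h, hp]; simp only [max_eq_left h]; ring
  have hp_integral : 2 * ∫ x, p x ∂ν = ∫ x, |g x - 1| ∂ν := by
    have hsub : ∫ x, (2 * p x - (g x - 1)) ∂ν
        = ∫ x, 2 * p x ∂ν - ∫ x, (g x - 1) ∂ν :=
      integral_sub (hp_int.const_mul 2) (hg_int.sub (integrable_const 1))
    rw [integral_congr_ae (Filter.Eventually.of_forall habs_eq), hsub,
      integral_const_mul, hgm1_integral]
    ring
  -- the set A bound
  have hA1 : (μ A).toReal = ∫ x in A, g x ∂ν := (Measure.setIntegral_toReal_rnDeriv hac A).symm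
  have hA2 : (ν A).toReal = ∫ x in A, (1:ℝ) ∂ν := by
    rw [setIntegral_const]; simp [Measure.real]
  have hA3 : (μ A).toReal - (ν A).toReal = ∫ x in A, (g x - 1) ∂ν := by
    rw [hA1, hA2, integral_sub (hg_int.integrableOn) (integrableOn_const (measure_ne_top ν A))]
  have hA4 : ∫ x in A, (g x - 1) ∂ν ≤ ∫ x in A, p x ∂ν := by
    apply setIntegral_mono_on ((hg_int.sub (integrable_const 1)).integrableOn)
      (hp_int.integrableOn) hA
    intro x _
    exact le_max_left _ _
  have hA5 : ∫ x in A, p x ∂ν ≤ ∫ x, p x ∂ν :=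
    setIntegral_le_integral hp_int (Filter.Eventually.of_forall hp_nonneg)
  -- conclude
  have hfinal : (μ A).toReal - (ν A).toReal ≤ Real.sqrt 2 * Real.sqrt KL / 2 := by
    rw [hA3]
    have : ∫ x, p x ∂ν ≤ Real.sqrt 2 * Real.sqrt KL / 2 := by linarith
    linarith
  have hsqrt : Real.sqrt 2 * Real.sqrt KL / 2 = Real.sqrt (KL / 2) := by
    have h2 : Real.sqrt 2 * Real.sqrt 2 = 2 := Real.mul_self_sqrt (by norm_num)
    have h2pos : (0:ℝ) < Real.sqrt 2 := Real.sqrt_pos.mpr (by norm_num)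
    rw [Real.sqrt_div hKL_nonneg 2]
    rw [div_eq_div_iff (by norm_num : (2:ℝ) ≠ 0) h2pos.ne']
    linear_combination Real.sqrt KL * h2
  rw [← hsqrt]
  exact hfinal

lemma my_lintegral_pi_prod {n : ℕ} {E : Type*} [MeasurableSpace E] (μ : Measure E)
    [SigmaFinite μ] (f : Fin n → E → ℝ≥0∞) (hf : ∀ i, Measurable (f i)) :
    ∫⁻ x : Fin n → E, ∏ i, f i (x i) ∂(Measure.pi fun _ => μ) = ∏ i, ∫⁻ y, f i y ∂μ := by
  induction n with
  | zero =>
      simp only [Finset.univ_eq_empty, Finset.prod_empty, lintegral_one,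
        Measure.pi_empty_univ]
  | succ n ih =>
      have h := (measurePreserving_piFinSuccAbove (fun _ : Fin (n+1) => μ) 0).symm
      rw [← h.lintegral_comp_emb (MeasurableEquiv.measurableEmbedding _)]
      have heq : ∀ p : E × (Fin n → E),
          (∏ i, f i ((MeasurableEquiv.piFinSuccAbove (fun _ : Fin (n+1) => E) 0).symm p i))
          = f 0 p.1 * ∏ j : Fin n, f j.succ (p.2 j) := by
        intro p
        simp_rw [MeasurableEquiv.piFinSuccAbove_symm_apply, Fin.insertNthEquiv,
          Fin.insertNth_zero]
        rw [Fin.prod_univ_succ]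
        simp [Fin.zero_succAbove]
      calc ∫⁻ p, (∏ i, f i ((MeasurableEquiv.piFinSuccAbove (fun _ : Fin (n+1) => E) 0).symm p i))
              ∂(μ.prod (Measure.pi fun _ : Fin n => μ))
          = ∫⁻ p, f 0 p.1 * ∏ j : Fin n, f j.succ (p.2 j)
              ∂(μ.prod (Measure.pi fun _ : Fin n => μ)) := by
            exact lintegral_congr heq
        _ = (∫⁻ y, f 0 y ∂μ) * ∫⁻ x : Fin n → E, ∏ j : Fin n, f j.succ (x j)
              ∂(Measure.pi fun _ => μ) := by
            exact lintegral_prod_mul (hf 0).aemeasurable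
              (Finset.measurable_prod _ fun (j : Fin n) _ =>
                (hf j.succ).comp (measurable_pi_apply j)).aemeasurable
        _ = ∏ i, ∫⁻ y, f i y ∂μ := by
            rw [ih (fun j => f j.succ) (fun j => hf j.succ), Fin.prod_univ_succ]

lemma my_pi_withDensity {α : Type*} [MeasurableSpace α] (ν P : Measure α)
    [IsProbabilityMeasure ν] [IsProbabilityMeasure P] {f : α → ℝ≥0∞}
    (hf : Measurable f) (hP : ν.withDensity f = P) (N : ℕ) :
    Measure.pi (fun _ : Fin N => P)
      = (Measure.pi fun _ : Fin N => ν).withDensity (fun w => ∏ i, f (w i)) := by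
  subst hP
  refine Measure.pi_eq (μ := fun _ : Fin N => ν.withDensity f) fun s hs => ?_
  rw [withDensity_apply _ (MeasurableSet.univ_pi hs),
    ← lintegral_indicator (MeasurableSet.univ_pi hs) (fun w => ∏ i, f (w i))]
  have heq : ∀ w : Fin N → α,
      (Set.pi Set.univ s).indicator (fun w => ∏ i, f (w i)) w
        = ∏ i, (s i).indicator f (w i) := by
    intro w
    by_cases hw : w ∈ Set.pi Set.univ s
    · rw [Set.indicator_of_mem hw]
      exact Finset.prod_congr rfl fun i _ =>
        (Set.indicator_of_mem (hw i (Set.mem_univ i)) f).symm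
    · rw [Set.indicator_of_notMem hw]
      rw [Set.mem_univ_pi] at hw
      push_neg at hw
      obtain ⟨i, hi⟩ := hw
      exact (Finset.prod_eq_zero (Finset.mem_univ i)
        (by rw [Set.indicator_of_notMem hi])).symm
  rw [lintegral_congr heq,
    my_lintegral_pi_prod ν (fun i => (s i).indicator f) (fun i => hf.indicator (hs i))]
  exact Finset.prod_congr rfl fun i _ => by
    rw [lintegral_indicator (hs i) f, ← withDensity_apply _ (hs i)]

lemma my_measurePreserving_eval {α : Type*} [MeasurableSpace α] (μ : Measure α)
    [IsProbabilityMeasure μ] (N : ℕ) (i : Fin N) :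
    MeasurePreserving (fun w : Fin N → α => w i) (Measure.pi fun _ => μ) μ := by
  refine ⟨measurable_pi_apply i, ?_⟩
  ext s hs
  rw [Measure.map_apply (measurable_pi_apply i) hs]
  have : (fun w : Fin N → α => w i) ⁻¹' s
      = Set.pi Set.univ (Function.update (fun _ => Set.univ) i s) := by
    rw [← Set.eval_preimage]
  rw [this, Measure.pi_pi]
  rw [Finset.prod_eq_single i (fun j _ hj => by
    rw [Function.update_of_ne hj]; exact measure_univ) (fun h => absurd (Finset.mem_univ i) h)]
  rw [Function.update_self]


/-- Transfer of random differential privacy between nearby distributions: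
if `KL(P‖Q) ≤ τ` and the set `A` of samples `w ~ P^{⊗(n+1)}` on which the induced
neighbouring pair `D(w), D'(w)` satisfies the `(ε,δ)`-DP inequality has `P^{⊗(n+1)}`-measure
at least `1 − γ`, then it has `Q^{⊗(n+1)}`-measure at least `1 − γ − √((n+1)τ/2)`. -/
theorem rdp_transfer_of_klDiv_le
    {𝒟 : Type*} [MeasurableSpace 𝒟] (P Q : Measure 𝒟)
    [IsProbabilityMeasure P] [IsProbabilityMeasure Q]
    (τ : ℝ) (hτ : 0 ≤ τ)
    (hac : P ≪ Q) (hint : Integrable (llr P Q) P)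
    (hkl : ∫ x, llr P Q x ∂P ≤ τ)
    {ℛ : Type*} [MeasurableSpace ℛ]
    (n : ℕ) (ε δ γ : ℝ) (hε : 0 < ε) (hδ0 : 0 ≤ δ) (hδ1 : δ ≤ 1)
    (hγ0 : 0 < γ) (hγ1 : γ < 1)
    (M : (Fin n → 𝒟) → Measure ℛ)
    (A : Set (Fin (n + 1) → 𝒟))
    (hAdef : A = {w : Fin (n + 1) → 𝒟 |
      ∀ R : Set ℛ, MeasurableSet R →
        M (fun i : Fin n => w i.castSucc) R ≤
          ENNReal.ofReal (Real.exp ε) *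
            M (fun i : Fin n =>
                if (i : ℕ) = n - 1 then w (Fin.last n) else w i.castSucc) R +
          ENNReal.ofReal δ})
    (hA : MeasurableSet A)
    (hP : 1 - γ ≤ ((Measure.pi fun _ : Fin (n + 1) => P) A).toReal) :
    1 - γ - Real.sqrt ((n + 1) * τ / 2) ≤
      ((Measure.pi fun _ : Fin (n + 1) => Q) A).toReal := by
  set μN := Measure.pi fun _ : Fin (n + 1) => P with hμN
  set νN := Measure.pi fun _ : Fin (n + 1) => Q with hνN
  set f : 𝒟 → ℝ≥0∞ := P.rnDeriv Q with hf
  have hfm : Measurable f := Measure.measurable_rnDeriv P Q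
  have hPQ : Q.withDensity f = P := Measure.withDensity_rnDeriv_eq P Q hac
  have h1 : μN = νN.withDensity (fun w => ∏ i, f (w i)) :=
    my_pi_withDensity Q P hfm hPQ (n + 1)
  have hFm : Measurable (fun w : Fin (n + 1) → 𝒟 => ∏ i, f (w i)) :=
    Finset.measurable_prod _ fun i _ => hfm.comp (measurable_pi_apply i)
  have hacN : μN ≪ νN := h1 ▸ withDensity_absolutelyContinuous νN _
  have hrn : μN.rnDeriv νN =ᵐ[νN] fun w => ∏ i, f (w i) := by
    rw [h1]; exact Measure.rnDeriv_withDensity νN hFm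
  have hrnμ : μN.rnDeriv νN =ᵐ[μN] fun w => ∏ i, f (w i) := hacN.ae_le hrn
  have hmp : ∀ i : Fin (n + 1), MeasurePreserving (fun w : Fin (n + 1) → 𝒟 => w i) μN P :=
    fun i => my_measurePreserving_eval P (n + 1) i
  have hpos : ∀ᵐ x ∂P, 0 < f x := Measure.rnDeriv_pos hac
  have hfin : ∀ᵐ x ∂P, f x < ⊤ := hac.ae_le (Measure.rnDeriv_lt_top P Q)
  have hall : ∀ᵐ w ∂μN, ∀ i, 0 < f (w i) ∧ f (w i) < ⊤ :=
    ae_all_iff.mpr fun i =>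
      ((hmp i).quasiMeasurePreserving.tendsto_ae).eventually (hpos.and hfin)
  have hllr_eq : llr μN νN =ᵐ[μN] fun w => ∑ i, llr P Q (w i) := by
    filter_upwards [hrnμ, hall] with w hw hw2
    have hne : ∀ i ∈ Finset.univ, (f (w i)).toReal ≠ 0 := fun i _ =>
      ENNReal.toReal_ne_zero.mpr ⟨(hw2 i).1.ne', (hw2 i).2.ne⟩
    simp only [llr_def]
    rw [hw, ENNReal.toReal_prod, Real.log_prod hne]
  have hint_i : ∀ i : Fin (n + 1), Integrable (fun w => llr P Q (w i)) μN := fun i =>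
    ((hmp i).integrable_comp (stronglyMeasurable_llr P Q).aestronglyMeasurable).mpr hint
  have hintN : Integrable (llr μN νN) μN :=
    (integrable_finset_sum _ fun i _ => hint_i i).congr hllr_eq.symm
  have hklN : ∫ w, llr μN νN w ∂μN ≤ (n + 1) * τ := by
    rw [integral_congr_ae hllr_eq, integral_finset_sum _ fun i _ => hint_i i]
    have heach : ∀ (L : 𝒟 → ℝ), StronglyMeasurable L → ∀ i : Fin (n + 1),
        ∫ w, L (w i) ∂μN = ∫ x, L x ∂P := by
      intro L hL i
      rw [← (hmp i).map_eq, integral_map (hmp i).measurable.aemeasurable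
        (((hmp i).map_eq).symm ▸ hL.aestronglyMeasurable)]
    calc (∑ i : Fin (n + 1), ∫ w, llr P Q (w i) ∂μN)
        = ∑ _i : Fin (n + 1), ∫ x, llr P Q x ∂P := by
          exact Finset.sum_congr rfl fun i _ => heach _ (stronglyMeasurable_llr P Q) i
      _ = (n + 1 : ℕ) * ∫ x, llr P Q x ∂P := by
          rw [Finset.sum_const, Finset.card_univ, Fintype.card_fin, nsmul_eq_mul]
      _ ≤ (n + 1 : ℕ) * τ := by
          apply mul_le_mul_of_nonneg_left hkl (by positivity)
      _ = (n + 1) * τ := by push_cast; ring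
  have hpin := my_pinsker μN νN hacN hintN A hA
  have hmono : Real.sqrt ((∫ w, llr μN νN w ∂μN) / 2) ≤ Real.sqrt ((n + 1) * τ / 2) :=
    Real.sqrt_le_sqrt (by linarith)
  linarith
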